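/- Let p be an odd prime and a an integer with p ∤ a. Then a ∈ ℚ_p(ζ_{p^n})^{p^n} if and only if a ∈ ℚ_p^{p^n}: i.e., a is a p^n-th power in the local cyclotomic field ℚ_p(ζ_{p^n}) exactly when it is already a p^n-th power in ℚ_p. -/

import Mathlib

set_option maxHeartbeats 1000000

open Finset in
lemma aux_pow (p : ℕ) [Fact p.Prime] (t : ℤ_[p]) :
    ∀ k : ℕ, ∃ c : ℤ_[p], (1 + p*t)^k = 1 + k*p*t + p^2*c := by
  intro k
  induction k with
  | zero => exact ⟨0, by norm_num⟩
  | succ k ih =>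
    obtain ⟨c, hc⟩ := ih
    refine ⟨k*t^2 + c + p*c*t, ?_⟩
    rw [pow_succ, hc]
    push_cast
    ring

open Finset in
lemma aux_sum (p : ℕ) [Fact p.Prime] (t : ℤ_[p]) (k : ℕ) :
    ∃ c : ℤ_[p], ∑ i ∈ Finset.range k, (1+p*t)^i
      = k + p*t*(∑ i ∈ Finset.range k, (i:ℤ_[p])) + p^2*c := by
  induction k with
  | zero => exact ⟨0, by simp⟩
  | succ k ih =>
    obtain ⟨c, hc⟩ := ih
    obtain ⟨d, hd⟩ := aux_pow p t k
    refine ⟨c + d, ?_⟩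
    rw [Finset.sum_range_succ, hc, Finset.sum_range_succ, hd]
    push_cast
    ring


lemma padic_pth_root {p : ℕ} [hp : Fact p.Prime] (hodd : Odd p) (x : ℚ_[p]) (hx : x ^ p = 1) :
    x = 1 := by
  by_contra hne
  have hnorm : ‖x‖ = 1 := by
    have h1 : ‖x‖ ^ p = 1 := by rw [← norm_pow, hx, norm_one]
    rcases lt_trichotomy ‖x‖ 1 with h | h | h
    · exact absurd h1 (ne_of_lt (pow_lt_one₀ (norm_nonneg x) h hp.out.ne_zero))
    · exact h
    · exact absurd h1 (ne_of_gt (one_lt_pow₀ h hp.out.ne_zero))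
  set u : ℤ_[p] := ⟨x, hnorm.le⟩ with hu
  have hux : (u : ℚ_[p]) = x := rfl
  have hup : u ^ p = 1 := by
    apply Subtype.ext
    push_cast [hux]
    exact hx
  have hu1 : u ≠ 1 := fun h => hne (by rw [← hux, h]; rfl)
  have h2 : PadicInt.toZMod u = 1 := by
    have h3 : (PadicInt.toZMod u) ^ p = 1 := by rw [← map_pow, hup, map_one]
    rwa [ZMod.pow_card] at h3
  have h3 : (p : ℤ_[p]) ∣ u - 1 := by
    rw [← Ideal.mem_span_singleton, ← PadicInt.maximalIdeal_eq_span_p, ← PadicInt.ker_toZMod,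
      RingHom.mem_ker, map_sub, h2, map_one, sub_self]
  obtain ⟨t, ht⟩ := h3
  have huf : u = 1 + p * t := by linear_combination ht
  have hsum0 : ∑ i ∈ Finset.range p, u ^ i = 0 := by
    have hg := geom_sum_mul u p
    rw [hup, sub_self] at hg
    rcases mul_eq_zero.mp hg with h | h
    · exact h
    · exact absurd (sub_eq_zero.mp h) hu1
  obtain ⟨c, hc⟩ := aux_sum p t p
  rw [← huf, hsum0] at hc
  have hS : (∑ i ∈ Finset.range p, (i : ℤ_[p])) = ((p * ((p-1)/2) : ℕ) : ℤ_[p]) := by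
    rw [← Nat.cast_sum]
    congr 1
    rw [Finset.sum_range_id]
    exact Nat.mul_div_assoc p (Nat.Odd.sub_odd hodd odd_one).two_dvd
  rw [hS] at hc
  have h6 : (p : ℤ_[p]) * (1 + p * (t * ((p-1)/2 : ℕ) + c)) = 0 := by
    push_cast at hc ⊢
    linear_combination -hc
  have h7 : (1 : ℤ_[p]) + p * (t * ((p-1)/2 : ℕ) + c) = 0 := by
    rcases mul_eq_zero.mp h6 with h | h
    · exact absurd h (Nat.cast_ne_zero.mpr hp.out.ne_zero)
    · exact h
  have h8 := congrArg PadicInt.toZMod h7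
  rw [map_add, map_one, map_mul, map_natCast, ZMod.natCast_self, zero_mul, add_zero, map_zero] at h8
  exact one_ne_zero h8


/-- Lemma 3.2 (I), first equivalence: for an odd prime `p` and an integer `a` with
`p ∤ a`, `a` is a `p^n`-th power in the local cyclotomic field `ℚ_p(ζ_{p^n})` iff it is
already a `p^n`-th power in `ℚ_p`. -/
theorem stmt_16 (p : ℕ) [hp : Fact p.Prime] (hodd : Odd p) (n : ℕ) (hn : 0 < n)
    (a : ℤ) (ha : ¬ (p : ℤ) ∣ a) :
    (∃ y : CyclotomicField (p ^ n) ℚ_[p],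
        y ^ p ^ n = algebraMap ℚ_[p] _ (a : ℚ_[p])) ↔
      ∃ x : ℚ_[p], x ^ p ^ n = (a : ℚ_[p]) := by
  let N : ℕ := p ^ n
  set K := CyclotomicField N ℚ_[p] with hKdef
  have hinj : Function.Injective (algebraMap ℚ_[p] K) := (algebraMap ℚ_[p] K).injective
  constructor
  swap
  · rintro ⟨x, hx⟩
    exact ⟨algebraMap ℚ_[p] K x, by rw [← map_pow, hx]⟩
  rintro ⟨y, hy⟩
  haveI hNe : NeZero ((N : ℕ) : ℚ_[p]) :=
    ⟨Nat.cast_ne_zero.mpr (pow_ne_zero n hp.out.ne_zero)⟩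
  haveI hgal : IsGalois ℚ_[p] K := IsCyclotomicExtension.isGalois (S := {N}) (K := ℚ_[p]) (L := K)
  haveI hfd : FiniteDimensional ℚ_[p] K :=
    IsCyclotomicExtension.finiteDimensional (S := {N}) (K := ℚ_[p]) K
  haveI hNeZ : NeZero ((N : ℕ)) := ⟨pow_ne_zero n hp.out.ne_zero⟩
  set ζ : K := IsCyclotomicExtension.zeta N ℚ_[p] K with hζdef
  have hζ : IsPrimitiveRoot ζ (N : ℕ) := IsCyclotomicExtension.zeta_spec N ℚ_[p] K
  have hζ' : IsPrimitiveRoot ζ (p ^ n) := hζ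
  -- helper : equal casts in ZMod (p^n) give equal powers of ζ
  have hred : ∀ i : ℕ, ζ ^ i = ζ ^ (i % p ^ n) := by
    intro i
    conv_lhs => rw [← Nat.div_add_mod i (p ^ n)]
    rw [pow_add, pow_mul, hζ'.pow_eq_one, one_pow, one_mul]
  have hpoweq : ∀ i j : ℕ, ((i : ZMod (p ^ n)) = (j : ZMod (p ^ n))) → ζ ^ i = ζ ^ j := by
    intro i j hij
    rw [hred i, hred j, (ZMod.natCast_eq_natCast_iff' i j (p ^ n)).mp hij]
  -- membership in the bottom field from being Galois-fixed
  have hbot : IntermediateField.fixedField (⊤ : Subgroup (K ≃ₐ[ℚ_[p]] K)) = ⊥ :=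
    OrderIso.map_bot (@IsGalois.intermediateFieldEquivSubgroup ℚ_[p] _ K _ _ _ hgal).symm
  have hmem : ∀ z : K, (∀ σ : K ≃ₐ[ℚ_[p]] K, σ z = z) →
      ∃ w : ℚ_[p], algebraMap ℚ_[p] K w = z := by
    intro z hz
    have h1 : z ∈ IntermediateField.fixedField (⊤ : Subgroup (K ≃ₐ[ℚ_[p]] K)) := by
      rintro ⟨g, -⟩
      exact hz g
    rw [hbot] at h1
    exact IntermediateField.mem_bot.1 h1
  -- basic nonvanishing
  have hane : (a : ℚ_[p]) ≠ 0 := by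
    have : a ≠ 0 := by rintro rfl; exact ha (dvd_zero _)
    exact_mod_cast Int.cast_ne_zero.mpr this
  have hyne : y ≠ 0 := by
    intro h
    rw [h, zero_pow (pow_ne_zero n hp.out.ne_zero)] at hy
    exact hane (hinj (by rw [← hy, map_zero]))
  -- cocycle values
  have hks : ∀ σ : K ≃ₐ[ℚ_[p]] K, ∃ k : ℕ, σ y = y * ζ ^ k := by
    intro σ
    have h1 : (σ y / y) ^ p ^ n = 1 := by
      rw [div_pow, ← map_pow, hy, AlgEquiv.commutes, ← hy]
      exact div_self (pow_ne_zero _ hyne)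
    obtain ⟨i, -, hi⟩ := hζ'.eq_pow_of_pow_eq_one h1
    exact ⟨i, by rw [hi, mul_comm, div_mul_cancel₀ _ hyne]⟩
  have hts : ∀ σ : K ≃ₐ[ℚ_[p]] K, ∃ t : ℕ, σ ζ = ζ ^ t := by
    intro σ
    have h1 : (σ ζ) ^ p ^ n = 1 := by rw [← map_pow, hζ'.pow_eq_one, map_one]
    obtain ⟨i, -, hi⟩ := hζ'.eq_pow_of_pow_eq_one h1
    exact ⟨i, hi.symm⟩
  have hadj : Algebra.adjoin ℚ_[p] ({ζ} : Set K) = ⊤ :=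
    IsCyclotomicExtension.adjoin_primitive_root_eq_top hζ
  have hcomm : ∀ (σ τ : K ≃ₐ[ℚ_[p]] K) (s t : ℕ), σ ζ = ζ ^ s → τ ζ = ζ ^ t →
      σ (τ y) = τ (σ y) := by
    intro σ τ s t hs ht
    have hle : Algebra.adjoin ℚ_[p] ({ζ} : Set K) ≤
        AlgHom.equalizer ((σ : K →ₐ[ℚ_[p]] K).comp (τ : K →ₐ[ℚ_[p]] K))
          ((τ : K →ₐ[ℚ_[p]] K).comp (σ : K →ₐ[ℚ_[p]] K)) := by
      rw [Algebra.adjoin_le_iff]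
      intro w hw
      rw [Set.mem_singleton_iff] at hw
      subst hw
      show σ (τ ζ) = τ (σ ζ)
      rw [hs, ht, map_pow, map_pow, hs, ht, ← pow_mul, ← pow_mul, mul_comm]
    rw [hadj] at hle
    exact hle (Algebra.mem_top : y ∈ ⊤)
  have hred' : ∀ i j : ℕ, ζ ^ i = ζ ^ j → ((i : ZMod (p ^ n)) = (j : ZMod (p ^ n))) := by
    intro i j hij
    rw [hred i, hred j] at hij
    rw [ZMod.natCast_eq_natCast_iff']
    exact hζ'.pow_inj (Nat.mod_lt _ (pow_pos hp.out.pos n))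
      (Nat.mod_lt _ (pow_pos hp.out.pos n)) hij
  -- a ζ_p-moving automorphism exists
  set ζp : K := ζ ^ (p ^ (n - 1)) with hζpdef
  have hζpne : ζp ≠ 1 :=
    hζ'.pow_ne_one_of_pos_of_lt (pow_ne_zero _ hp.out.ne_zero)
      (Nat.pow_lt_pow_right hp.out.one_lt (Nat.sub_lt hn Nat.one_pos))
  have hppow : p ^ (n - 1) * p = p ^ n := by
    rw [← pow_succ, Nat.sub_add_cancel hn]
  obtain ⟨σ₀, hσ₀⟩ : ∃ σ₀ : K ≃ₐ[ℚ_[p]] K, σ₀ ζp ≠ ζp := by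
    by_contra hcon
    push_neg at hcon
    obtain ⟨w, hw⟩ := hmem ζp hcon
    have hw1 : w ^ p = 1 := by
      apply hinj
      rw [map_pow, hw, map_one, hζpdef, ← pow_mul, hppow, hζ'.pow_eq_one]
    rw [padic_pth_root hodd w hw1, map_one] at hw
    exact hζpne hw.symm
  obtain ⟨k₀, hk₀⟩ := hks σ₀
  obtain ⟨t₀, ht₀⟩ := hts σ₀
  have hσ₀ζ : σ₀ ζp = ζ ^ (t₀ * p ^ (n - 1)) := by
    rw [hζpdef, map_pow, ht₀, ← pow_mul]
  have hunit : IsUnit ((t₀ : ZMod (p ^ n)) - 1) := by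
    by_contra hnu
    apply hσ₀
    rw [hσ₀ζ, hζpdef]
    apply hpoweq
    -- reduce to x * p^(n-1) = 0 where x = t₀ - 1
    set x : ZMod (p ^ n) := (t₀ : ZMod (p ^ n)) - 1 with hxdef
    have hxcast : ((x.val : ℕ) : ZMod (p ^ n)) = x := by
      simp [ZMod.natCast_val, ZMod.cast_id]
    have hpdvd : p ∣ x.val := by
      by_contra hpd
      exact hnu (hxcast ▸ (ZMod.isUnit_iff_coprime x.val (p ^ n)).mpr
        ((Nat.coprime_comm.mp ((Nat.Prime.coprime_iff_not_dvd hp.out).mpr hpd)).pow_right n))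
    obtain ⟨w₀, hw₀⟩ := hpdvd
    have hx0 : x * ((p : ZMod (p ^ n)) ^ (n - 1)) = 0 := by
      rw [← hxcast, hw₀, ← Nat.cast_pow, ← Nat.cast_mul]
      rw [ZMod.natCast_eq_zero_iff]
      exact ⟨w₀, by rw [← hppow]; ring⟩
    push_cast
    linear_combination hx0
  set R := ZMod (p ^ n) with hRdef
  set u : Rˣ := hunit.unit with hudef
  have hu : (u : R) = (t₀ : R) - 1 := IsUnit.unit_spec hunit
  set m : R := (k₀ : R) * ↑u⁻¹ with hmdef
  have hrel : ∀ (σ : K ≃ₐ[ℚ_[p]] K) (k t : ℕ), σ y = y * ζ ^ k → σ ζ = ζ ^ t →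
      (k : R) = m * ((t : R) - 1) := by
    intro σ k t hk ht
    have hc := hcomm σ σ₀ t t₀ ht ht₀
    have e1 : σ (σ₀ y) = y * ζ ^ (k + t * k₀) := by
      rw [hk₀, map_mul, hk, map_pow, ht, ← pow_mul, pow_add, mul_assoc]
    have e2 : σ₀ (σ y) = y * ζ ^ (k₀ + t₀ * k) := by
      rw [hk, map_mul, hk₀, map_pow, ht₀, ← pow_mul, pow_add, mul_assoc]
    rw [e1, e2] at hc
    have e3 := mul_left_cancel₀ hyne hc
    have e4 := hred' _ _ e3
    push_cast at e4
    have e5 : (k : R) * ((t₀ : R) - 1) = (k₀ : R) * ((t : R) - 1) := by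
      linear_combination -e4
    have e6 : (k : R) = (k : R) * ((t₀ : R) - 1) * ↑u⁻¹ := by
      rw [← hu, mul_assoc, Units.mul_inv, mul_one]
    rw [e6, e5, hmdef]
    ring
  set M : ℕ := (-m).val with hMdef
  have hMc : ((M : ℕ) : R) = -m := by
    rw [hMdef, ZMod.natCast_val, ZMod.cast_id]
  set z : K := y * ζ ^ M with hzdef
  have hfix : ∀ σ : K ≃ₐ[ℚ_[p]] K, σ z = z := by
    intro σ
    obtain ⟨k, hk⟩ := hks σ
    obtain ⟨t, ht⟩ := hts σ
    have e1 : σ z = y * ζ ^ (k + t * M) := by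
      rw [hzdef, map_mul, hk, map_pow, ht, ← pow_mul, pow_add, mul_assoc]
    rw [e1, hzdef]
    congr 1
    apply hpoweq
    have hr := hrel σ k t hk ht
    rw [Nat.cast_add, Nat.cast_mul, hMc]
    linear_combination hr
  obtain ⟨x, hxz⟩ := hmem z hfix
  refine ⟨x, ?_⟩
  apply hinj
  rw [map_pow, hxz, hzdef, mul_pow, ← pow_mul, mul_comm M (p ^ n), pow_mul, hζ'.pow_eq_one,
    one_pow, mul_one, hy]
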